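/- Budget violation in the hardness reduction: let u_1,…,u_n ≥ 0 with total sum U, and define B_j = 2^{n−j}(U/2 + 1) for 1 ≤ j ≤ n as above and the total budget B = ∑_{i=1}^n B_i + U/2. Then for every j, (∑_{i=1}^{j−1} B_i) + 2·B_j + u_j > B. In other words, testing both jobs of any pair j (cost 2B_j + u_j) together with the cheaper job of every earlier pair exceeds the budget. -/

import Mathlib

lemma geom_tail (n j : ℕ) (h : j ≤ n) :
    ∑ i ∈ Finset.Icc (j+1) n, (2:ℝ)^(n-i) = 2^(n-j) - 1 := by
  induction n with
  | zero => interval_cases j; simp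
  | succ n ih =>
    rcases eq_or_lt_of_le h with rfl | h'
    · simp
    · have hj : j ≤ n := Nat.lt_succ_iff.mp h'
      rw [Finset.sum_Icc_succ_top (by omega)]
      have hre : ∀ i ∈ Finset.Icc (j+1) n, (2:ℝ)^(n+1-i) = 2 * 2^(n-i) := by
        intro i hi
        simp only [Finset.mem_Icc] at hi
        rw [show n+1-i = (n-i)+1 by omega, pow_succ]
        ring
      rw [Finset.sum_congr rfl hre, ← Finset.mul_sum, ih hj]
      rw [show n+1-(n+1) = 0 by omega, show n+1-j = (n-j)+1 by omega, pow_succ]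
      ring

/-- Budget violation in the hardness reduction: with
`B j = 2^(n−j)(U/2+1)`, `U = ∑ u i`, and total budget
`B = ∑ B i + U/2`, testing both jobs of any pair `j` together with the
cheaper job of every earlier pair exceeds the budget. -/
theorem hardness_budget_violation (n : ℕ) (u : ℕ → ℝ)
    (hu : ∀ i, 0 ≤ u i) (U : ℝ) (hU : U = ∑ i ∈ Finset.Icc 1 n, u i)
    (B : ℕ → ℝ) (hB : ∀ j, B j = 2 ^ (n - j) * (U / 2 + 1))
    (Btot : ℝ) (hBtot : Btot = (∑ i ∈ Finset.Icc 1 n, B i) + U / 2) :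
    ∀ j ∈ Finset.Icc 1 n,
      (∑ i ∈ Finset.Icc 1 (j - 1), B i) + 2 * B j + u j > Btot := by
  intro j hj
  simp only [Finset.mem_Icc] at hj
  obtain ⟨hj1, hjn⟩ := hj
  -- split the total sum
  have hsplit : ∑ i ∈ Finset.Icc 1 n, B i
      = (∑ i ∈ Finset.Icc 1 (j-1), B i) + B j + ∑ i ∈ Finset.Icc (j+1) n, B i := by
    have h1 : Finset.Icc 1 n = Finset.Ioc 0 n := by ext x; simp [Nat.lt_iff_add_one_le]
    have h2 : Finset.Icc 1 (j-1) = Finset.Ioc 0 (j-1) := by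
      ext x; simp [Nat.lt_iff_add_one_le]
    have h3 : Finset.Icc (j+1) n = Finset.Ioc j n := by
      ext x; simp only [Finset.mem_Icc, Finset.mem_Ioc]; omega
    rw [h1, h2, h3]
    rw [← Finset.sum_Ioc_consecutive B (show 0 ≤ j-1 by omega) (show j-1 ≤ n by omega)]
    rw [← Finset.sum_Ioc_consecutive B (show j-1 ≤ j by omega) (show j ≤ n by omega)]
    have : Finset.Ioc (j-1) j = {j} := by
      ext x; simp [Finset.mem_Ioc]; omega
    rw [this, Finset.sum_singleton]; ring
  -- key identity: B j = tail sum + (U/2+1)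
  have hU2 : (0:ℝ) ≤ U / 2 + 1 := by
    have : 0 ≤ U := by
      rw [hU]; exact Finset.sum_nonneg fun i _ => hu i
    linarith
  have htail : ∑ i ∈ Finset.Icc (j+1) n, B i = B j - (U/2 + 1) := by
    have : ∑ i ∈ Finset.Icc (j+1) n, B i
        = (∑ i ∈ Finset.Icc (j+1) n, (2:ℝ)^(n-i)) * (U/2 + 1) := by
      rw [Finset.sum_mul]
      exact Finset.sum_congr rfl fun i _ => hB i
    rw [this, geom_tail n j hjn, hB j]
    ring
  have huj := hu j
  rw [hBtot, hsplit, htail]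
  linarith
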